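/- For every integer g ≥ 2 there exists a group of order 8(g+1) generated by elements a, b, c satisfying a^{2g+2} = b² = c² = 1, ab = ba, bc = cb, and cacab = 1, in which a has order exactly 2g+2. -/

import Mathlib

namespace AM

variable (n : ℕ) (h : (2:ℕ) ∣ n)

/-- The additive involution (x,y) ↦ (-x, x̄+y). -/
def e : ZMod n × ZMod 2 ≃+ ZMod n × ZMod 2 where
  toFun p := (-p.1, ZMod.castHom h (ZMod 2) p.1 + p.2)
  invFun p := (-p.1, ZMod.castHom h (ZMod 2) p.1 + p.2)
  left_inv p := by
    cases p with | mk x y => refine Prod.ext ?_ ?_ <;> simp [ZMod.cast_neg h, ← add_assoc, CharTwo.add_self_eq_zero]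
  right_inv p := by
    cases p with | mk x y => refine Prod.ext ?_ ?_ <;> simp [ZMod.cast_neg h, ← add_assoc, CharTwo.add_self_eq_zero]
  map_add' p q := by
    cases p with | mk x y =>
    cases q with | mk z w =>
    refine Prod.ext ?_ ?_ <;> simp [ZMod.cast_add h] <;> ring

def sigma : MulAut (Multiplicative (ZMod n × ZMod 2)) :=
  AddEquiv.toMultiplicative (e n h)

lemma sigma_sq : sigma n h * sigma n h = 1 := by
  apply MulEquiv.ext; intro x
  show sigma n h (sigma n h x) = x
  simp [sigma, AddEquiv.toMultiplicative]
  exact (e n h).left_inv _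

def phiFun (z : Multiplicative (ZMod 2)) :
    MulAut (Multiplicative (ZMod n × ZMod 2)) :=
  if Multiplicative.toAdd z = 0 then 1 else sigma n h

lemma phiFun_mul (x y : Multiplicative (ZMod 2)) :
    phiFun n h (x * y) = phiFun n h x * phiFun n h y := by
  have hc : ∀ z : ZMod 2, z = 0 ∨ z = 1 := by decide
  have h2 : (1 : ZMod 2) + 1 = 0 := by decide
  unfold phiFun
  rcases hc (Multiplicative.toAdd x) with hx | hx <;>
    rcases hc (Multiplicative.toAdd y) with hy | hy <;>
    simp [toAdd_mul, hx, hy, h2, sigma_sq n h]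

def phi : Multiplicative (ZMod 2) →* MulAut (Multiplicative (ZMod n × ZMod 2)) where
  toFun := phiFun n h
  map_one' := by simp [phiFun]
  map_mul' := phiFun_mul n h

abbrev Gp := SemidirectProduct (Multiplicative (ZMod n × ZMod 2))
    (Multiplicative (ZMod 2)) (phi n h)

def aa : Gp n h := SemidirectProduct.inl (Multiplicative.ofAdd (1, 0))
def bb : Gp n h := SemidirectProduct.inl (Multiplicative.ofAdd (0, 1))
def cc : Gp n h := SemidirectProduct.inr (Multiplicative.ofAdd 1)

lemma aa_pow (k : ℕ) :
    (aa n h) ^ k = SemidirectProduct.inl (Multiplicative.ofAdd ((k : ZMod n), 0)) := by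
  rw [aa, ← map_pow, ← ofAdd_nsmul]
  congr 1
  refine Prod.ext ?_ ?_ <;> simp

lemma bb_pow (k : ℕ) :
    (bb n h) ^ k = SemidirectProduct.inl (Multiplicative.ofAdd (0, (k : ZMod 2))) := by
  rw [bb, ← map_pow, ← ofAdd_nsmul]
  congr 1
  refine Prod.ext ?_ ?_ <;> simp

lemma cc_pow (k : ℕ) :
    (cc n h) ^ k = SemidirectProduct.inr (Multiplicative.ofAdd ((k : ZMod 2))) := by
  rw [cc, ← map_pow, ← ofAdd_nsmul]
  congr 1
  simp

lemma decomp (x : Gp n h) :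
    x = SemidirectProduct.inl x.left * SemidirectProduct.inr x.right := by
  ext <;> simp

lemma phi_one : phi n h (Multiplicative.ofAdd 1) = sigma n h := by
  have hh : phi n h (Multiplicative.ofAdd 1) = phiFun n h (Multiplicative.ofAdd 1) := rfl
  rw [hh]
  unfold phiFun
  norm_num

lemma sigma_apply (p : ZMod n × ZMod 2) :
    sigma n h (Multiplicative.ofAdd p) =
      Multiplicative.ofAdd (-p.1, ZMod.castHom h (ZMod 2) p.1 + p.2) := rfl

lemma mul_bc : bb n h * cc n h = cc n h * bb n h := by
  ext : 1
  · simp [bb, cc, phi_one, sigma_apply]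
  · simp [bb, cc]

lemma relation : cc n h * aa n h * cc n h * aa n h * bb n h = 1 := by
  have h11 : (1 : ZMod 2) + 1 = 0 := by decide
  have hc1 : ZMod.castHom h (ZMod 2) (-1) = 1 := by
    rw [map_neg, map_one]; decide
  ext : 1
  · simp [aa, bb, cc, phi_one, sigma_apply, toAdd_mul, h11, map_one, ← ofAdd_add,
      hc1, Prod.ext_iff]
  · simp [aa, bb, cc, h11, ← ofAdd_add]

end AM

theorem accola_maclachlan_group_exists (g : ℕ) (hg : 2 ≤ g) :
    ∃ (G : Type) (_ : Group G) (a b c : G),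
      Nat.card G = 8 * (g + 1) ∧
      Subgroup.closure {a, b, c} = (⊤ : Subgroup G) ∧
      a ^ (2 * g + 2) = 1 ∧ b ^ 2 = 1 ∧ c ^ 2 = 1 ∧
      a * b = b * a ∧ b * c = c * b ∧ c * a * c * a * b = 1 ∧
      orderOf a = 2 * g + 2 := by
  set n := 2 * g + 2 with hn
  have hdvd : (2:ℕ) ∣ n := ⟨g + 1, by omega⟩
  haveI : NeZero n := ⟨by omega⟩
  refine ⟨AM.Gp n hdvd, inferInstance, AM.aa n hdvd, AM.bb n hdvd, AM.cc n hdvd,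
    ?_, ?_, ?_, ?_, ?_, ?_, AM.mul_bc n hdvd, AM.relation n hdvd, ?_⟩
  · -- cardinality
    have e1 : AM.Gp n hdvd ≃ (Multiplicative (ZMod n × ZMod 2)) × Multiplicative (ZMod 2) :=
      ⟨fun x => (x.left, x.right), fun p => ⟨p.1, p.2⟩, fun x => rfl, fun p => rfl⟩
    rw [Nat.card_congr e1, Nat.card_prod, Nat.card_congr (Multiplicative.toAdd),
      Nat.card_congr (Multiplicative.toAdd), Nat.card_prod, Nat.card_zmod, Nat.card_zmod]
    omega
  · -- closure
    rw [eq_top_iff]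
    intro x _
    have hmem : ∀ y ∈ ({AM.aa n hdvd, AM.bb n hdvd, AM.cc n hdvd} : Set (AM.Gp n hdvd)),
        y ∈ Subgroup.closure {AM.aa n hdvd, AM.bb n hdvd, AM.cc n hdvd} :=
      fun y hy => Subgroup.subset_closure hy
    rw [AM.decomp n hdvd x]
    have hinl : SemidirectProduct.inl x.left ∈
        Subgroup.closure {AM.aa n hdvd, AM.bb n hdvd, AM.cc n hdvd} := by
      have key : SemidirectProduct.inl x.left =
          (AM.aa n hdvd) ^ (Multiplicative.toAdd x.left).1.val *
          (AM.bb n hdvd) ^ (Multiplicative.toAdd x.left).2.val := by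
        have hmm : ∀ u v : Multiplicative (ZMod n × ZMod 2),
            (SemidirectProduct.inl u : AM.Gp n hdvd) * SemidirectProduct.inl v =
              SemidirectProduct.inl (u * v) := fun u v => (map_mul _ _ _).symm
        rw [AM.aa_pow, AM.bb_pow, hmm, ← ofAdd_add]
        congr 1
        · refine Prod.ext ?_ ?_ <;> simp [ZMod.natCast_val, ZMod.cast_id]
      rw [key]
      exact mul_mem (pow_mem (hmem _ (by simp)) _) (pow_mem (hmem _ (by simp)) _)
    have hinr : SemidirectProduct.inr x.right ∈
        Subgroup.closure {AM.aa n hdvd, AM.bb n hdvd, AM.cc n hdvd} := by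
      have key : SemidirectProduct.inr x.right =
          (AM.cc n hdvd) ^ (Multiplicative.toAdd x.right).val := by
        rw [AM.cc_pow]
        congr 1
        simp [ZMod.natCast_val, ZMod.cast_id]
      rw [key]
      exact pow_mem (hmem _ (by simp)) _
    exact mul_mem hinl hinr
  · -- a ^ n = 1
    rw [AM.aa_pow]
    simp
    rfl
  · rw [AM.bb_pow, show ((2:ℕ) : ZMod 2) = 0 from by decide]
    rfl
  · rw [AM.cc_pow, show ((2:ℕ) : ZMod 2) = 0 from by decide]
    simp
  · -- ab = ba
    have hmm : ∀ x y : Multiplicative (ZMod n × ZMod 2),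
        (SemidirectProduct.inl x : AM.Gp n hdvd) * SemidirectProduct.inl y =
          SemidirectProduct.inl (x * y) := fun x y => (map_mul _ _ _).symm
    rw [AM.aa, AM.bb, hmm, hmm, mul_comm]
  · -- order of a
    rw [AM.aa, orderOf_injective _ SemidirectProduct.inl_injective,
      orderOf_ofAdd_eq_addOrderOf, Prod.addOrderOf_mk, ZMod.addOrderOf_one,
      addOrderOf_zero, Nat.lcm_one_right]
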